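/- Let s_α be a Sturmian word of angle α, where α ∈ (0,1) is irrational with bounded partial quotients. Then there exists a constant C > 0 such that for every n, the total number of distinct abelian-square factors of s_α of length at most n is at least C·n². -/

import Mathlib

open scoped Classical

/-- `u` is a factor of the infinite word `s`. -/
def FactorOf {A : Type*} (u : List A) (s : ℕ → A) : Prop :=
  ∃ i : ℕ, u = (List.range u.length).map fun k => s (i + k)

/-- The Sturmian word of angle `α` and initial point `ρ`, with `a = true`:
position `n` is `a` iff `{ρ + nα} ∈ [1−α, 1)`. -/
noncomputable def sturmian (α ρ : ℝ) (n : ℕ) : Bool :=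
  if 1 - α ≤ Int.fract (ρ + n * α) then true else false

/-- An abelian square: a word `u ++ v` with `|u| = |v|` and equal Parikh
vectors. -/
def IsAbelianSquare (w : List Bool) : Prop :=
  ∃ u v : List Bool, w = u ++ v ∧ u.length = v.length ∧
    ∀ c, u.count c = v.count c

/-- The partial quotients of the simple continued fraction expansion of `α`. -/
noncomputable def cfrac (α : ℝ) : ℕ → ℤ
  | 0 => ⌊α⌋
  | n + 1 => cfrac (Int.fract α)⁻¹ n

/-- `α` has bounded partial quotients. -/
def BddPartialQuotients (α : ℝ) : Prop := ∃ B : ℤ, ∀ i : ℕ, cfrac α i ≤ B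

/-- If `α ∈ (0,1)` is irrational with bounded partial quotients, then there is
`C > 0` such that for every `n`, the Sturmian word of angle `α` has at least
`C·n²` distinct abelian-square factors of length at most `n`. -/

lemma fract_small {θ : ℝ} (hθ : Irrational θ) {ε : ℝ} (hε : 0 < ε) (hε2 : ε ≤ 1/2) :
    ∃ q : ℕ, 1 ≤ q ∧ Int.fract ((q : ℝ) * θ) ∈ Set.Ioo 0 ε := by
  -- first find q with fract (q θ) ∈ (0,ε) ∪ (1-ε,1)
  obtain ⟨q, hq1, hq⟩ : ∃ q : ℕ, 1 ≤ q ∧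
      (Int.fract ((q : ℝ) * θ) ∈ Set.Ioo 0 ε ∨ Int.fract ((q : ℝ) * θ) ∈ Set.Ioo (1 - ε) 1) := by
    obtain ⟨N, hN⟩ := exists_nat_gt (1/ε)
    have hN0 : 0 < N := by
      have : (0:ℝ) < N := lt_trans (by positivity) hN
      exact_mod_cast this
    have hmaps : ∀ j ∈ Finset.range (N + 1),
        (⌊(N : ℝ) * Int.fract ((j : ℝ) * θ)⌋.toNat) ∈ Finset.range N := by
      intro j _
      have h0 : (0:ℝ) ≤ (N : ℝ) * Int.fract ((j : ℝ) * θ) := by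
        have := Int.fract_nonneg ((j : ℝ) * θ); positivity
      have h1 : (N : ℝ) * Int.fract ((j : ℝ) * θ) < N := by
        have := Int.fract_lt_one ((j : ℝ) * θ)
        have : (N : ℝ) * Int.fract ((j : ℝ) * θ) < (N : ℝ) * 1 := by
          apply mul_lt_mul_of_pos_left this (by exact_mod_cast hN0)
        simpa using this
      simp only [Finset.mem_range]
      have hfl : ⌊(N : ℝ) * Int.fract ((j : ℝ) * θ)⌋ < (N : ℤ) := by
        exact_mod_cast Int.floor_lt.mpr (by exact_mod_cast h1)
      omega
    obtain ⟨j1, hj1, j2, hj2, hne, heq⟩ :=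
      Finset.exists_ne_map_eq_of_card_lt_of_maps_to (by simp) hmaps
    -- wlog j1 < j2
    wlog hlt : j1 < j2 generalizing j1 j2
    · exact this j2 hj2 j1 hj1 hne.symm heq.symm (by omega)
    have hfloor : ⌊(N : ℝ) * Int.fract ((j1 : ℝ) * θ)⌋ = ⌊(N : ℝ) * Int.fract ((j2 : ℝ) * θ)⌋ := by
      have h1 : (0:ℤ) ≤ ⌊(N : ℝ) * Int.fract ((j1 : ℝ) * θ)⌋ :=
        Int.floor_nonneg.mpr (by have := Int.fract_nonneg ((j1 : ℝ) * θ); positivity)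
      have h2 : (0:ℤ) ≤ ⌊(N : ℝ) * Int.fract ((j2 : ℝ) * θ)⌋ :=
        Int.floor_nonneg.mpr (by have := Int.fract_nonneg ((j2 : ℝ) * θ); positivity)
      omega
    have habs : |Int.fract ((j2 : ℝ) * θ) - Int.fract ((j1 : ℝ) * θ)| < ε := by
      have := Int.abs_sub_lt_one_of_floor_eq_floor hfloor.symm
      rw [← mul_sub, abs_mul, abs_of_nonneg (by positivity : (0:ℝ) ≤ (N:ℝ))] at this
      have hNpos : (0:ℝ) < N := by exact_mod_cast hN0
      have h1N : |Int.fract ((j2 : ℝ) * θ) - Int.fract ((j1 : ℝ) * θ)| < 1 / N := by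
        rw [lt_div_iff₀ hNpos]; linarith [this]
      calc |Int.fract ((j2 : ℝ) * θ) - Int.fract ((j1 : ℝ) * θ)| < 1/N := h1N
        _ ≤ ε := by
          rw [div_le_iff₀ hNpos]
          have : 1/ε < N := hN
          rw [div_lt_iff₀ hε] at this
          linarith
    set δ := Int.fract ((j2 : ℝ) * θ) - Int.fract ((j1 : ℝ) * θ) with hδ
    have hδne : δ ≠ 0 := by
      intro h
      have : Int.fract ((j2 : ℝ) * θ) = Int.fract ((j1 : ℝ) * θ) := by linarith [h, hδ ▸ h]
      obtain ⟨z, hz⟩ := Int.fract_eq_fract.mp this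
      have hd : ((j2 : ℤ) - j1) ≠ 0 := by
        simp only [sub_ne_zero]; exact_mod_cast hne.symm
      have : ((((j2 : ℤ) - j1) : ℝ)) * θ = z := by push_cast; linarith [hz]
      exact (hθ.intCast_mul hd).ne_int z (by push_cast at this ⊢; linarith)
    refine ⟨j2 - j1, by omega, ?_⟩
    have hcast : ((j2 - j1 : ℕ) : ℝ) * θ = (j2 : ℝ) * θ - (j1 : ℝ) * θ := by
      have : ((j2 - j1 : ℕ) : ℝ) = (j2 : ℝ) - j1 := by
        push_cast [Nat.cast_sub hlt.le]; ring
      rw [this]; ring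
    have hfr : Int.fract (((j2 - j1 : ℕ) : ℝ) * θ) = Int.fract δ := by
      rw [hcast]
      have : (j2 : ℝ) * θ - (j1 : ℝ) * θ =
          δ + ((⌊(j2 : ℝ) * θ⌋ - ⌊(j1 : ℝ) * θ⌋ : ℤ) : ℝ) := by
        simp only [hδ, Int.fract]; push_cast; ring
      rw [this, Int.fract_add_intCast]
    rcases lt_or_gt_of_ne hδne with hneg | hpos
    · right
      have habs' : -ε < δ := by cases abs_lt.mp habs; assumption
      have : Int.fract δ = δ + 1 := by
        have h2 := Int.fract_add_intCast δ (1 : ℤ)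
        rw [← h2]
        push_cast
        exact Int.fract_eq_self.mpr ⟨by linarith, by linarith⟩
      rw [hfr, this]
      refine Set.mem_Ioo.mpr ⟨by linarith, by linarith⟩
    · left
      have habs' : δ < ε := by cases abs_lt.mp habs; assumption
      have : Int.fract δ = δ := Int.fract_eq_self.mpr ⟨le_of_lt hpos, by linarith⟩
      rw [hfr, this]; exact ⟨hpos, habs'⟩
  rcases hq with h | h
  · exact ⟨q, hq1, h⟩
  · -- booster
    set e := 1 - Int.fract ((q : ℝ) * θ) with he
    have he0 : 0 < e := by simp only [he]; linarith [h.2]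
    have heε : e < ε := by simp only [he]; linarith [h.1]
    set k := ⌊(1 - ε)/e⌋₊ + 1 with hk
    have hke1 : 1 - ε < k * e := by
      have := Nat.lt_floor_add_one ((1 - ε)/e)
      have : (1 - ε)/e < (k : ℝ) := by push_cast [hk]; linarith [this]
      calc 1 - ε = ((1-ε)/e) * e := by field_simp
        _ < k * e := by apply mul_lt_mul_of_pos_right this he0
    have hke2 : (k : ℝ) * e < 1 := by
      have hfl : (⌊(1 - ε)/e⌋₊ : ℝ) ≤ (1 - ε)/e := Nat.floor_le (div_nonneg (by linarith) he0.le)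
      have : ((k : ℝ) - 1) * e ≤ 1 - ε := by
        push_cast [hk]
        calc (⌊(1 - ε)/e⌋₊ + 1 - 1 : ℝ) * e = (⌊(1 - ε)/e⌋₊ : ℝ) * e := by ring
          _ ≤ ((1-ε)/e) * e := by apply mul_le_mul_of_nonneg_right hfl he0.le
          _ = 1 - ε := by field_simp
      nlinarith [he0, heε]
    refine ⟨k * q, Nat.one_le_iff_ne_zero.mpr (Nat.mul_ne_zero (by omega) (by omega)), ?_⟩
    have hcast : ((k * q : ℕ) : ℝ) * θ = (k : ℝ) * ((q:ℝ) * θ) := by push_cast; ring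
    have hfr : Int.fract (((k * q : ℕ) : ℝ) * θ) = 1 - k * e := by
      rw [hcast]
      have : (k : ℝ) * ((q:ℝ) * θ) = (1 - k*e) + ((k * ⌊(q:ℝ)*θ⌋ + k - 1 : ℤ) : ℝ) := by
        have : Int.fract ((q:ℝ)*θ) = (q:ℝ)*θ - ⌊(q:ℝ)*θ⌋ := rfl
        push_cast
        simp only [he]
        push_cast [this]
        ring
      rw [this, Int.fract_add_intCast]
      exact Int.fract_eq_self.mpr ⟨by linarith, by linarith⟩
    rw [hfr]
    constructor <;> [linarith; linarith]

lemma uniform_hit {θ : ℝ} (hθ : Irrational θ) {a b : ℝ} (ha : 0 ≤ a) (hb : b ≤ 1)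
    (hab : a < b) :
    ∃ R : ℕ, 1 ≤ R ∧ ∀ x : ℝ, ∃ r : ℕ, 1 ≤ r ∧ r ≤ R ∧
      Int.fract (x + (r : ℝ) * θ) ∈ Set.Ioo a b := by
  have hε : (0:ℝ) < (b - a)/2 := by linarith
  have hε2 : (b - a)/2 ≤ 1/2 := by linarith
  obtain ⟨q, hq1, hd⟩ := fract_small hθ hε hε2
  set d := Int.fract ((q : ℝ) * θ) with hdd
  obtain ⟨hd0, hdε⟩ := hd
  set K := ⌈(2:ℝ)/d⌉₊ with hK
  have hKd : (2:ℝ) ≤ K * d := by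
    have := Nat.le_ceil ((2:ℝ)/d)
    calc (2:ℝ) = (2/d) * d := by field_simp
      _ ≤ K * d := mul_le_mul_of_nonneg_right this hd0.le
  refine ⟨K * q, ?_, ?_⟩
  · have hK1 : 1 ≤ K := by
      by_contra h
      push_neg at h
      interval_cases K
      simp at hKd; linarith
    exact Nat.one_le_iff_ne_zero.mpr (Nat.mul_ne_zero (by omega) (by omega))
  intro x
  have hPK : 1 + a < Int.fract x + (K : ℝ) * d := by
    have := Int.fract_nonneg x
    have hb1 : a < 1 := lt_of_lt_of_le hab hb
    linarith
  set P : ℕ → Prop := fun k => 1 + a < Int.fract x + (k : ℝ) * d with hP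
  have hex : ∃ k, P k := ⟨K, hPK⟩
  set k₀ := Nat.find hex with hk₀
  have hPk₀ : P k₀ := Nat.find_spec hex
  have hk₀K : k₀ ≤ K := Nat.find_le hPK
  have hk₀1 : 1 ≤ k₀ := by
    rcases Nat.eq_zero_or_pos k₀ with h | h
    · exfalso
      have := hPk₀
      rw [h] at this
      simp only [P, Nat.cast_zero, zero_mul, add_zero] at this
      have := Int.fract_lt_one x
      linarith
    · exact h
  have hprev : ¬ P (k₀ - 1) := Nat.find_min hex (by omega)
  simp only [P, not_lt] at hprev
  have hup : Int.fract x + (k₀ : ℝ) * d < 1 + b := by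
    have : ((k₀ : ℝ)) = ((k₀ - 1 : ℕ) : ℝ) + 1 := by push_cast [Nat.cast_sub hk₀1]; ring
    rw [this]
    have : Int.fract x + (((k₀ - 1 : ℕ) : ℝ) + 1) * d
        = (Int.fract x + ((k₀ - 1 : ℕ) : ℝ) * d) + d := by ring
    rw [this]
    linarith
  set z := Int.fract x + (k₀ : ℝ) * d with hz
  have hz1 : 1 + a < z := hPk₀
  have hzfr : Int.fract (x + ((k₀ * q : ℕ) : ℝ) * θ) = z - 1 := by
    have h1 : x + ((k₀ * q : ℕ) : ℝ) * θ = (z - 1) + ((⌊x⌋ + k₀ * ⌊(q:ℝ)*θ⌋ + 1 : ℤ) : ℝ) := by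
      have hfx : Int.fract x = x - ⌊x⌋ := rfl
      have hfq : d = (q:ℝ)*θ - ⌊(q:ℝ)*θ⌋ := rfl
      simp only [hz]
      push_cast [hfx, hfq]
      ring
    rw [h1, Int.fract_add_intCast]
    exact Int.fract_eq_self.mpr ⟨by linarith, by linarith⟩
  exact ⟨k₀ * q, Nat.one_le_iff_ne_zero.mpr (Nat.mul_ne_zero (by omega) (by omega)),
    Nat.mul_le_mul_right q hk₀K, by rw [hzfr]; exact ⟨by linarith, by linarith⟩⟩

noncomputable def W (α ρ : ℝ) (i L : ℕ) : List Bool :=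
  (List.range L).map fun k => sturmian α ρ (i + k)

noncomputable def gfl (α ρ : ℝ) (j : ℕ) : ℤ := ⌊ρ + (j : ℝ) * α⌋

lemma floor_add_of_fract {u v : ℝ} (h : Int.fract u + Int.fract v < 1) :
    ⌊u + v⌋ = ⌊u⌋ + ⌊v⌋ := by
  have h0 : 0 ≤ Int.fract u + Int.fract v :=
    add_nonneg (Int.fract_nonneg u) (Int.fract_nonneg v)
  have : u + v = ((⌊u⌋ + ⌊v⌋ : ℤ) : ℝ) + (Int.fract u + Int.fract v) := by
    have hu : Int.fract u = u - ⌊u⌋ := rfl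
    have hv : Int.fract v = v - ⌊v⌋ := rfl
    push_cast [hu, hv]; ring
  rw [this, Int.floor_intCast_add]
  have : ⌊Int.fract u + Int.fract v⌋ = 0 := Int.floor_eq_zero_iff.mpr ⟨h0, h⟩
  omega

lemma length_W (α ρ : ℝ) (i L : ℕ) : (W α ρ i L).length = L := by simp [W]

lemma factorOf_W (α ρ : ℝ) (i L : ℕ) : FactorOf (W α ρ i L) (sturmian α ρ) := by
  refine ⟨i, ?_⟩
  rw [length_W]
  rfl

lemma gfl_succ (α ρ : ℝ) (h0 : 0 < α) (h1 : α < 1) (j : ℕ) :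
    gfl α ρ (j + 1) = gfl α ρ j + (if sturmian α ρ j = true then 1 else 0) := by
  have hw : ρ + ((j : ℝ) + 1) * α = ((⌊ρ + (j:ℝ)*α⌋ : ℤ) : ℝ) + (Int.fract (ρ + (j:ℝ)*α) + α) := by
    have : Int.fract (ρ + (j:ℝ)*α) = (ρ + (j:ℝ)*α) - ⌊ρ + (j:ℝ)*α⌋ := rfl
    rw [this]; ring
  have hfr0 : 0 ≤ Int.fract (ρ + (j:ℝ)*α) := Int.fract_nonneg _
  have hfr1 : Int.fract (ρ + (j:ℝ)*α) < 1 := Int.fract_lt_one _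
  by_cases hc : 1 - α ≤ Int.fract (ρ + (j:ℝ)*α)
  · have key : ⌊Int.fract (ρ + (j:ℝ)*α) + α⌋ = 1 := by
      rw [Int.floor_eq_iff]
      constructor <;> push_cast <;> linarith
    simp only [gfl, sturmian, if_pos hc]
    push_cast
    rw [hw, Int.floor_intCast_add, key]
  · have key : ⌊Int.fract (ρ + (j:ℝ)*α) + α⌋ = 0 := by
      push_neg at hc
      exact Int.floor_eq_zero_iff.mpr ⟨by linarith, by linarith⟩
    simp only [gfl, sturmian, if_neg hc]
    push_cast
    rw [hw, Int.floor_intCast_add, key]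

lemma count_W (α ρ : ℝ) (h0 : 0 < α) (h1 : α < 1) (i L : ℕ) :
    ((W α ρ i L).count true : ℤ) = gfl α ρ (i + L) - gfl α ρ i := by
  induction L with
  | zero => simp [W]
  | succ L ih =>
    have : W α ρ i (L + 1) = W α ρ i L ++ [sturmian α ρ (i + L)] := by
      simp [W, List.range_succ]
    rw [this, List.count_append]
    have hg := gfl_succ α ρ h0 h1 (i + L)
    have harr : i + (L + 1) = (i + L) + 1 := by omega
    rw [harr, hg]
    cases hc : sturmian α ρ (i + L) <;>
      simp only [hc, if_true, if_false, Bool.false_eq_true, Bool.true_eq_false,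
        List.count_cons, List.count_nil] at hg ⊢ <;>
      push_cast <;> simp <;> linarith [ih, hg]

lemma count_bool (l : List Bool) : l.count true + l.count false = l.length := by
  induction l with
  | nil => simp
  | cons a l ih => cases a <;> simp [List.count_cons] <;> omega

lemma W_append (α ρ : ℝ) (i m m' : ℕ) :
    W α ρ i (m + m') = W α ρ i m ++ W α ρ (i + m) m' := by
  simp only [W, List.range_add, List.map_append, List.map_map]
  congr 1
  apply List.map_congr_left
  intro k _
  simp [Function.comp]
  congr 1
  omega

lemma isAS (α ρ : ℝ) (h0 : 0 < α) (h1 : α < 1) {i m : ℕ}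
    (hm : Int.fract (ρ + (i : ℝ) * α) + 2 * Int.fract ((m : ℝ) * α) < 1) :
    IsAbelianSquare (W α ρ i (2 * m)) := by
  have hx0 : 0 ≤ Int.fract (ρ + (i : ℝ) * α) := Int.fract_nonneg _
  have hβ0 : 0 ≤ Int.fract ((m : ℝ) * α) := Int.fract_nonneg _
  refine ⟨W α ρ i m, W α ρ (i + m) m, ?_, by rw [length_W, length_W], ?_⟩
  · rw [show 2 * m = m + m by ring, W_append]
  have key : (W α ρ i m).count true = (W α ρ (i + m) m).count true := by
    have c1 := count_W α ρ h0 h1 i m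
    have c2 := count_W α ρ h0 h1 (i + m) m
    have g1 : gfl α ρ (i + m) = gfl α ρ i + ⌊(m : ℝ) * α⌋ := by
      simp only [gfl]
      push_cast
      rw [show ρ + ((i : ℝ) + (m:ℝ)) * α = (ρ + (i:ℝ)*α) + ((m:ℝ)*α) by ring]
      apply floor_add_of_fract
      linarith
    have hfr2 : Int.fract ((2 * (m : ℝ)) * α) = 2 * Int.fract ((m : ℝ) * α) := by
      have heq : (2 * (m : ℝ)) * α = (2 * Int.fract ((m:ℝ)*α)) + ((2 * ⌊(m:ℝ)*α⌋ : ℤ) : ℝ) := by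
        have hdef : Int.fract ((m:ℝ)*α) = (m:ℝ)*α - ⌊(m:ℝ)*α⌋ := rfl
        push_cast [hdef]; ring
      rw [heq, Int.fract_add_intCast]
      exact Int.fract_eq_self.mpr ⟨by linarith, by linarith⟩
    have hfl2 : ⌊(2 * (m : ℝ)) * α⌋ = 2 * ⌊(m : ℝ) * α⌋ := by
      rw [show (2 * (m : ℝ)) * α = (m:ℝ)*α + (m:ℝ)*α by ring, two_mul]
      apply floor_add_of_fract
      linarith
    have g2 : gfl α ρ (i + 2 * m) = gfl α ρ i + 2 * ⌊(m : ℝ) * α⌋ := by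
      simp only [gfl]
      push_cast
      rw [show ρ + ((i : ℝ) + 2*(m:ℝ)) * α = (ρ + (i:ℝ)*α) + ((2*(m:ℝ))*α) by ring]
      have h2' : ⌊(ρ + (i:ℝ)*α) + ((2*(m:ℝ))*α)⌋ = ⌊ρ + (i:ℝ)*α⌋ + ⌊(2*(m:ℝ))*α⌋ := by
        apply floor_add_of_fract
        rw [hfr2]
        linarith
      rw [h2', hfl2]
    have : ((W α ρ i m).count true : ℤ) = ((W α ρ (i + m) m).count true : ℤ) := by
      rw [c1, c2, g1]
      rw [show (i + m) + m = i + 2 * m by ring, g2]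
      ring
    exact_mod_cast this
  intro c
  cases c
  · have l1 := count_bool (W α ρ i m)
    have l2 := count_bool (W α ρ (i + m) m)
    rw [length_W] at l1 l2
    omega
  · exact key

lemma fract_neg_inj (α : ℝ) (hirr : Irrational α) {j j' : ℕ}
    (h : Int.fract (-((j : ℝ) * α)) = Int.fract (-((j' : ℝ) * α))) : j = j' := by
  by_contra hne
  obtain ⟨z, hz⟩ := Int.fract_eq_fract.mp h
  have hd : ((j' : ℤ) - j) ≠ 0 := by
    have : (j' : ℤ) ≠ (j : ℤ) := by exact_mod_cast Ne.symm hne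
    simp only [sub_ne_zero]
    exact this
  have : (((j' : ℤ) - j : ℤ) : ℝ) * α = z := by push_cast; linarith
  exact (hirr.intCast_mul hd).ne_int z this

lemma words_ne (α ρ : ℝ) (h0 : 0 < α) (h1 : α < 1) {i i' L j : ℕ}
    (hj1 : 1 ≤ j) (hjL : j ≤ L)
    (hlow : Int.fract (ρ + (i : ℝ) * α) < Int.fract (-((j : ℝ) * α)))
    (hhigh : Int.fract (-((j : ℝ) * α)) ≤ Int.fract (ρ + (i' : ℝ) * α)) :
    W α ρ i L ≠ W α ρ i' L := by
  intro heq
  have hlet : ∀ k, k < L → sturmian α ρ (i + k) = sturmian α ρ (i' + k) := by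
    intro k hk
    have := congrArg (fun l => l[k]?) heq
    simpa [W, List.getElem?_map, List.getElem?_range hk] using this
  have hgl : ∀ k, k ≤ L → gfl α ρ (i + k) - gfl α ρ i = gfl α ρ (i' + k) - gfl α ρ i' := by
    intro k hk
    induction k with
    | zero => simp
    | succ k ih =>
      have hk' : k < L := by omega
      have e1 := gfl_succ α ρ h0 h1 (i + k)
      have e2 := gfl_succ α ρ h0 h1 (i' + k)
      have ihh := ih (by omega)
      rw [show i + (k+1) = (i+k)+1 by omega, show i' + (k+1) = (i'+k)+1 by omega, e1, e2,
        hlet k hk']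
      linarith [ihh]
  -- rewrite gfl (i + j) via fract
  have hsplit : ∀ i₀ : ℕ, gfl α ρ (i₀ + j) - gfl α ρ i₀ = ⌊Int.fract (ρ + (i₀:ℝ)*α) + (j:ℝ)*α⌋ := by
    intro i₀
    simp only [gfl]
    have : ρ + ((i₀ + j : ℕ) : ℝ) * α
        = ((⌊ρ + (i₀:ℝ)*α⌋ : ℤ) : ℝ) + (Int.fract (ρ + (i₀:ℝ)*α) + (j:ℝ)*α) := by
      have : Int.fract (ρ + (i₀:ℝ)*α) = (ρ + (i₀:ℝ)*α) - ⌊ρ + (i₀:ℝ)*α⌋ := rfl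
      push_cast [this]; ring
    rw [this, Int.floor_intCast_add]
    ring
  have hj' := hgl j hjL
  rw [hsplit i, hsplit i'] at hj'
  -- now the contradiction
  set v := Int.fract (-((j : ℝ) * α)) with hv
  have hT : v + (j : ℝ) * α = ((-⌊-((j : ℝ) * α)⌋ : ℤ) : ℝ) := by
    have : v = -((j : ℝ) * α) - ⌊-((j : ℝ) * α)⌋ := rfl
    push_cast [this]; ring
  set T : ℤ := -⌊-((j : ℝ) * α)⌋ with hTdef
  have hlt : ⌊Int.fract (ρ + (i:ℝ)*α) + (j:ℝ)*α⌋ < T := by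
    apply Int.floor_lt.mpr
    have : Int.fract (ρ + (i:ℝ)*α) + (j:ℝ)*α < v + (j:ℝ)*α := by linarith
    rw [hT] at this
    exact_mod_cast this
  have hge : T ≤ ⌊Int.fract (ρ + (i':ℝ)*α) + (j:ℝ)*α⌋ := by
    apply Int.le_floor.mpr
    have : v + (j : ℝ) * α ≤ Int.fract (ρ + (i':ℝ)*α) + (j:ℝ)*α := by linarith
    rw [hT] at this
    exact_mod_cast this
  omega

lemma per_m (α ρ : ℝ) (hirr : Irrational α) (h0 : 0 < α) (h1 : α < 1)
    {R₂ : ℕ}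
    (hR₂ : ∀ x : ℝ, ∃ r : ℕ, 1 ≤ r ∧ r ≤ R₂ ∧
      Int.fract (x + (r : ℝ) * (-α)) ∈ Set.Ioo (1/4 : ℝ) (3/4))
    (hhit : ∀ a b : ℝ, 0 ≤ a → b ≤ 1 → a < b →
      ∃ r : ℕ, 1 ≤ r ∧ Int.fract (ρ + (r : ℝ) * α) ∈ Set.Ioo a b)
    {m : ℕ} (hβ : Int.fract ((m : ℝ) * α) ∈ Set.Ioo (0 : ℝ) (1/8)) :
    ∃ S : Finset (List Bool), 2 * m / R₂ ≤ S.card + 1 ∧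
      ∀ w ∈ S, w.length = 2 * m ∧ FactorOf w (sturmian α ρ) ∧ IsAbelianSquare w := by
  set K := 2 * m / R₂ with hK
  -- choose boundary indices
  set jf : ℕ → ℕ := fun k => k * R₂ + (hR₂ (-(((k * R₂ : ℕ)) : ℝ) * α)).choose with hjf
  have hjspec : ∀ k : ℕ, k * R₂ < jf k ∧ jf k ≤ (k + 1) * R₂ ∧
      Int.fract (-((jf k : ℝ) * α)) ∈ Set.Ioo (1/4 : ℝ) (3/4) := by
    intro k
    obtain ⟨hr1, hrR, hmem⟩ := (hR₂ (-(((k * R₂ : ℕ)) : ℝ) * α)).choose_spec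
    refine ⟨by simp only [hjf]; omega, by simp only [hjf]; rw [add_mul, one_mul]; omega, ?_⟩
    have harg : -(((k * R₂ : ℕ)) : ℝ) * α + ((hR₂ (-(((k * R₂ : ℕ)) : ℝ) * α)).choose : ℝ) * (-α)
        = -((jf k : ℝ) * α) := by
      simp only [hjf]
      push_cast
      ring
    rw [← harg]
    exact hmem
  set vf : ℕ → ℝ := fun k => Int.fract (-((jf k : ℝ) * α)) with hvf
  have hjbnd : ∀ k, k < K → 1 ≤ jf k ∧ jf k ≤ 2 * m := by
    intro k hk
    obtain ⟨hl, hu, _⟩ := hjspec k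
    have h1' : (k + 1) * R₂ ≤ K * R₂ := Nat.mul_le_mul_right _ (by omega)
    have h2' : K * R₂ ≤ 2 * m := Nat.div_mul_le_self _ _
    omega
  have hinj : Set.InjOn vf (Finset.range K) := by
    intro k hk k' hk' hvv
    have hjj : jf k = jf k' := fract_neg_inj α hirr hvv
    by_contra hne
    rcases Nat.lt_or_ge k k' with hlt | hge
    · obtain ⟨hl, hu, _⟩ := hjspec k
      obtain ⟨hl', _, _⟩ := hjspec k'
      have : (k + 1) * R₂ ≤ k' * R₂ := Nat.mul_le_mul_right _ (by omega)
      omega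
    · have hlt : k' < k := by omega
      obtain ⟨hl, hu, _⟩ := hjspec k'
      obtain ⟨hl', _, _⟩ := hjspec k
      have : (k' + 1) * R₂ ≤ k * R₂ := Nat.mul_le_mul_right _ (by omega)
      omega
  set V : Finset ℝ := (Finset.range K).image vf with hV
  have hcard : V.card = K := by
    rw [hV, Finset.card_image_of_injOn hinj, Finset.card_range]
  set e := V.orderIsoOfFin hcard with he
  set v : Fin K → ℝ := fun t => ((e t : V) : ℝ) with hv
  have hvV : ∀ t : Fin K, v t ∈ V := fun t => (e t).2
  have hv14 : ∀ t : Fin K, v t ∈ Set.Ioo (1/4 : ℝ) (3/4) := by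
    intro t
    obtain ⟨k, hk, hvk⟩ := Finset.mem_image.mp (hvV t)
    rw [← hvk]
    exact (hjspec k).2.2
  have hvlt : ∀ {t t' : Fin K}, t < t' → v t < v t' := by
    intro t t' h
    exact Subtype.coe_lt_coe.mpr (e.strictMono h)
  have hvle : ∀ {t t' : Fin K}, t ≤ t' → v t ≤ v t' := by
    intro t t' h
    exact Subtype.coe_le_coe.mpr (e.monotone h)
  -- picks of orbit points between consecutive boundary values
  have hpick : ∀ t t' : Fin K, t < t' → ∃ r : ℕ, 1 ≤ r ∧
      Int.fract (ρ + (r : ℝ) * α) ∈ Set.Ioo (v t) (v t') := by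
    intro t t' h
    refine hhit (v t) (v t') ?_ ?_ (hvlt h)
    · have := (hv14 t).1; linarith
    · have := (hv14 t').2; linarith
  set F : Fin K → Fin K → ℕ := fun t t' => if h : t < t' then (hpick t t' h).choose else 0
    with hF
  have hFspec : ∀ (t t' : Fin K) (h : t < t'), 1 ≤ F t t' ∧
      Int.fract (ρ + (F t t' : ℝ) * α) ∈ Set.Ioo (v t) (v t') := by
    intro t t' h
    simp only [hF, dif_pos h]
    exact (hpick t t' h).choose_spec
  set wf : ℕ → List Bool := fun t =>
    if h : t + 1 < K then W α ρ (F ⟨t, Nat.lt_of_succ_lt h⟩ ⟨t + 1, h⟩) (2 * m) else []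
    with hwf
  refine ⟨(Finset.range (K - 1)).image wf, ?_, ?_⟩
  · have hII : Set.InjOn wf (Finset.range (K - 1)) := by
      intro t ht t' ht' hww
      simp only [Finset.coe_range, Set.mem_Iio] at ht ht'
      by_contra hne
      -- wlog t < t'
      have main : ∀ s s' : ℕ, s < K - 1 → s' < K - 1 → s < s' → wf s ≠ wf s' := by
        intro s s' hs hs' hlt
        have hs1 : s + 1 < K := by omega
        have hs'1 : s' + 1 < K := by omega
        have hwfs : wf s = W α ρ (F ⟨s, Nat.lt_of_succ_lt hs1⟩ ⟨s + 1, hs1⟩) (2 * m) :=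
          dif_pos hs1
        have hwfs' : wf s' = W α ρ (F ⟨s', Nat.lt_of_succ_lt hs'1⟩ ⟨s' + 1, hs'1⟩) (2 * m) :=
          dif_pos hs'1
        rw [hwfs, hwfs']
        -- get the boundary point v ⟨s+1⟩ as some fract (-(j α))
        obtain ⟨k, hkK, hvk⟩ := Finset.mem_image.mp (hvV ⟨s + 1, hs1⟩)
        simp only [Finset.mem_range] at hkK
        obtain ⟨hj1, hj2m⟩ := hjbnd k hkK
        have hlow : Int.fract (ρ + ((F ⟨s, Nat.lt_of_succ_lt hs1⟩ ⟨s + 1, hs1⟩ : ℕ) : ℝ) * α)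
            < Int.fract (-((jf k : ℝ) * α)) := by
          have hlt2 := (hFspec ⟨s, Nat.lt_of_succ_lt hs1⟩ ⟨s + 1, hs1⟩ (by simp [Fin.mk_lt_mk])).2.2
          rw [show Int.fract (-((jf k : ℝ) * α)) = v ⟨s + 1, hs1⟩ from hvk]
          exact hlt2
        have hhigh : Int.fract (-((jf k : ℝ) * α))
            ≤ Int.fract (ρ + ((F ⟨s', Nat.lt_of_succ_lt hs'1⟩ ⟨s' + 1, hs'1⟩ : ℕ) : ℝ) * α) := by
          have h1' := (hFspec ⟨s', Nat.lt_of_succ_lt hs'1⟩ ⟨s' + 1, hs'1⟩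
            (by simp [Fin.mk_lt_mk])).2.1
          have h2' : v ⟨s + 1, hs1⟩ ≤ v ⟨s', Nat.lt_of_succ_lt hs'1⟩ :=
            hvle (by simp [Fin.mk_le_mk]; omega)
          rw [show Int.fract (-((jf k : ℝ) * α)) = v ⟨s + 1, hs1⟩ from hvk]
          linarith
        exact words_ne α ρ h0 h1 hj1 hj2m hlow hhigh
      rcases Nat.lt_or_ge t t' with hlt | hge
      · exact main t t' ht ht' hlt hww
      · exact main t' t ht' ht (by omega) hww.symm
    rw [Finset.card_image_of_injOn hII, Finset.card_range]
    omega
  · intro w hw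
    obtain ⟨t, ht, hwt⟩ := Finset.mem_image.mp hw
    simp only [Finset.mem_range] at ht
    have ht1 : t + 1 < K := by omega
    have hwfs : wf t = W α ρ (F ⟨t, Nat.lt_of_succ_lt ht1⟩ ⟨t + 1, ht1⟩) (2 * m) := dif_pos ht1
    rw [← hwt, hwfs]
    refine ⟨length_W _ _ _ _, factorOf_W _ _ _ _, ?_⟩
    apply isAS α ρ h0 h1
    have hmem := (hFspec ⟨t, Nat.lt_of_succ_lt ht1⟩ ⟨t + 1, ht1⟩ (by simp [Fin.mk_lt_mk])).2
    have hup : v ⟨t + 1, ht1⟩ < 3/4 := (hv14 _).2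
    have hβ2 := hβ.2
    have := hmem.2
    linarith

set_option maxHeartbeats 1000000 in
theorem stmt15 (α ρ : ℝ) (hirr : Irrational α) (h0 : 0 < α) (h1 : α < 1)
    (hbdd : BddPartialQuotients α) :
    ∃ C : ℝ, 0 < C ∧ ∀ n : ℕ,
      C * (n : ℝ) ^ 2 ≤
        ({u : List Bool | FactorOf u (sturmian α ρ) ∧ IsAbelianSquare u ∧
          u.length ≤ n}.ncard : ℝ) := by
  obtain ⟨R₁, hR₁1, hR₁⟩ := uniform_hit hirr (a := 0) (b := 1/8) le_rfl (by norm_num)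
    (by norm_num)
  obtain ⟨R₂, hR₂1, hR₂⟩ := uniform_hit hirr.neg (a := 1/4) (b := 3/4) (by norm_num)
    (by norm_num) (by norm_num)
  have hhit : ∀ a b : ℝ, 0 ≤ a → b ≤ 1 → a < b →
      ∃ r : ℕ, 1 ≤ r ∧ Int.fract (ρ + (r : ℝ) * α) ∈ Set.Ioo a b := by
    intro a b ha hb hab
    obtain ⟨R, _, hR⟩ := uniform_hit hirr ha hb hab
    obtain ⟨r, hr1, _, hmem⟩ := hR ρ
    exact ⟨r, hr1, hmem⟩
  set n₀ : ℕ := 16 * R₁ + 8 * R₂ with hn₀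
  refine ⟨min ((64 * R₁ * R₂ : ℝ))⁻¹ (((n₀ : ℝ) ^ 2))⁻¹, ?_, ?_⟩
  · apply lt_min
    · have : (0:ℝ) < 64 * R₁ * R₂ := by positivity
      positivity
    · have : (0:ℝ) < (n₀ : ℝ) ^ 2 := by
        have : (0:ℕ) < n₀ := by omega
        have : (0:ℝ) < (n₀ : ℝ) := by exact_mod_cast this
        positivity
      positivity
  intro n
  set setS : Set (List Bool) := {u : List Bool | FactorOf u (sturmian α ρ) ∧
    IsAbelianSquare u ∧ u.length ≤ n} with hsetS
  have hfin : setS.Finite := (List.finite_length_le Bool n).subset (fun u hu => hu.2.2)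
  have hone : (1 : ℝ) ≤ (setS.ncard : ℝ) := by
    have hmem : ([] : List Bool) ∈ setS := by
      refine ⟨⟨0, rfl⟩, ⟨[], [], rfl, rfl, fun c => rfl⟩, Nat.zero_le n⟩
    have := (Set.ncard_pos hfin).mpr ⟨[], hmem⟩
    exact_mod_cast this
  by_cases hsmall : n < n₀
  · calc min ((64 * R₁ * R₂ : ℝ))⁻¹ (((n₀ : ℝ) ^ 2))⁻¹ * (n : ℝ) ^ 2
        ≤ (((n₀ : ℝ) ^ 2))⁻¹ * (n₀ : ℝ) ^ 2 := by
          apply mul_le_mul (min_le_right _ _)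
          · have : (n : ℝ) ≤ (n₀ : ℝ) := by exact_mod_cast hsmall.le
            have hn0 : (0:ℝ) ≤ (n:ℝ) := by positivity
            nlinarith
          · positivity
          · positivity
      _ = 1 := by
          have : (0:ℝ) < (n₀ : ℝ) := by
            have : (0:ℕ) < n₀ := by omega
            exact_mod_cast this
          field_simp
      _ ≤ (setS.ncard : ℝ) := hone
  -- main case
  push_neg at hsmall
  -- block choices of m
  set mf : ℕ → ℕ := fun k =>
    (n / 4 + k * R₁) + (hR₁ (((n / 4 + k * R₁ : ℕ) : ℝ) * α)).choose with hmf
  have hmspec : ∀ k : ℕ, n / 4 + k * R₁ < mf k ∧ mf k ≤ n / 4 + (k + 1) * R₁ ∧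
      Int.fract ((mf k : ℝ) * α) ∈ Set.Ioo (0 : ℝ) (1/8) := by
    intro k
    obtain ⟨hr1, hrR, hmem⟩ := (hR₁ (((n / 4 + k * R₁ : ℕ) : ℝ) * α)).choose_spec
    refine ⟨by simp only [hmf]; omega,
      by simp only [hmf]; rw [add_mul, one_mul]; omega, ?_⟩
    have harg : ((n / 4 + k * R₁ : ℕ) : ℝ) * α +
        ((hR₁ (((n / 4 + k * R₁ : ℕ) : ℝ) * α)).choose : ℝ) * α = ((mf k : ℝ)) * α := by
      simp only [hmf]
      push_cast
      ring
    rw [← harg]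
    exact hmem
  set K₁ : ℕ := n / (8 * R₁) with hK₁
  have hK₁R : K₁ * R₁ ≤ n / 8 := by
    have h1' : K₁ = n / 8 / R₁ := by rw [hK₁, Nat.div_div_eq_div_mul]
    rw [h1']
    exact Nat.div_mul_le_self _ _
  have h2m : ∀ k, k < K₁ → 2 * mf k ≤ n := by
    intro k hk
    obtain ⟨_, hup, _⟩ := hmspec k
    have h3 : (k + 1) * R₁ ≤ K₁ * R₁ := Nat.mul_le_mul_right _ (by omega)
    have h4 : 4 * (n / 4) ≤ n := Nat.mul_div_le n 4
    have h8 : 8 * (n / 8) ≤ n := Nat.mul_div_le n 8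
    omega
  have hminj : ∀ k k', mf k = mf k' → k = k' := by
    intro k k' hkk
    by_contra hne
    rcases Nat.lt_or_ge k k' with hlt | hge
    · obtain ⟨hl, hu, _⟩ := hmspec k
      obtain ⟨hl', _, _⟩ := hmspec k'
      have : (k + 1) * R₁ ≤ k' * R₁ := Nat.mul_le_mul_right _ (by omega)
      omega
    · have hlt : k' < k := by omega
      obtain ⟨hl, hu, _⟩ := hmspec k'
      obtain ⟨hl', _, _⟩ := hmspec k
      have : (k' + 1) * R₁ ≤ k * R₁ := Nat.mul_le_mul_right _ (by omega)
      omega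
  -- the per-m finsets
  set Sf : ℕ → Finset (List Bool) := fun k =>
    (per_m α ρ hirr h0 h1 hR₂ hhit (hmspec k).2.2).choose with hSf
  have hSfspec : ∀ k : ℕ, 2 * mf k / R₂ ≤ (Sf k).card + 1 ∧
      ∀ w ∈ Sf k, w.length = 2 * mf k ∧ FactorOf w (sturmian α ρ) ∧ IsAbelianSquare w :=
    fun k => (per_m α ρ hirr h0 h1 hR₂ hhit (hmspec k).2.2).choose_spec
  set T : Finset (List Bool) := (Finset.range K₁).biUnion Sf with hT
  have hdisj : ∀ k ∈ (Finset.range K₁), ∀ k' ∈ (Finset.range K₁), k ≠ k' →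
      Disjoint (Sf k) (Sf k') := by
    intro k _ k' _ hne
    rw [Finset.disjoint_left]
    intro w hw hw'
    have h1' := ((hSfspec k).2 w hw).1
    have h2' := ((hSfspec k').2 w hw').1
    exact hne (hminj k k' (by omega))
  have hTcard := Finset.card_biUnion hdisj
  set D : ℕ := (2 * (n / 4 + 1)) / R₂ with hD
  have hcardlow : ∀ k ∈ Finset.range K₁, D - 1 ≤ (Sf k).card := by
    intro k hk
    have h1' := (hSfspec k).1
    have h2' : D ≤ 2 * mf k / R₂ := by
      apply Nat.div_le_div_right
      have := (hmspec k).1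
      omega
    omega
  have hsum : K₁ * (D - 1) ≤ T.card := by
    rw [hTcard]
    have := Finset.card_nsmul_le_sum (Finset.range K₁) (fun k => (Sf k).card) (D - 1)
      hcardlow
    simpa [mul_comm] using this
  -- T lands inside setS
  have hsub : (T : Set (List Bool)) ⊆ setS := by
    intro w hw
    have hw' : w ∈ T := Finset.mem_coe.mp hw
    obtain ⟨k, hk, hwk⟩ := Finset.mem_biUnion.mp hw'
    obtain ⟨hlen, hfac, hAS⟩ := (hSfspec k).2 w hwk
    refine ⟨hfac, hAS, ?_⟩
    rw [hlen]
    exact h2m k (Finset.mem_range.mp hk)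
  have hTle : (T.card : ℝ) ≤ (setS.ncard : ℝ) := by
    have := Set.ncard_le_ncard hsub hfin
    rw [Set.ncard_coe_finset] at this
    exact_mod_cast this
  -- real estimates
  have hR₁pos : (0:ℝ) < (R₁ : ℝ) := by exact_mod_cast hR₁1
  have hR₂pos : (0:ℝ) < (R₂ : ℝ) := by exact_mod_cast hR₂1
  have hn16 : (16 : ℝ) * R₁ ≤ (n : ℝ) := by
    have : 16 * R₁ ≤ n := by omega
    exact_mod_cast this
  have hn8 : (8 : ℝ) * R₂ ≤ (n : ℝ) := by
    have : 8 * R₂ ≤ n := by omega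
    exact_mod_cast this
  have hK₁low : (n : ℝ) / (16 * R₁) ≤ (K₁ : ℝ) := by
    have hmod : n = 8 * R₁ * K₁ + n % (8 * R₁) := (Nat.div_add_mod n (8 * R₁)).symm
    have hmlt : n % (8 * R₁) < 8 * R₁ := Nat.mod_lt _ (by omega)
    have h1' : (n : ℝ) < ((K₁ : ℝ) + 1) * (8 * R₁) := by
      have : (n : ℝ) = 8 * (R₁ : ℝ) * K₁ + ((n % (8 * R₁) : ℕ) : ℝ) := by
        exact_mod_cast hmod
      have h2' : ((n % (8 * R₁) : ℕ) : ℝ) < 8 * R₁ := by exact_mod_cast hmlt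
      nlinarith
    rw [div_le_iff₀ (by positivity)]
    nlinarith
  have hDlow : (n : ℝ) / (4 * R₂) + 1 ≤ (D : ℝ) := by
    have hmod : 2 * (n / 4 + 1) = R₂ * D + (2 * (n / 4 + 1)) % R₂ :=
      (Nat.div_add_mod (2 * (n / 4 + 1)) R₂).symm
    have hmlt : (2 * (n / 4 + 1)) % R₂ < R₂ := Nat.mod_lt _ (by omega)
    have hq : (n : ℝ) / 2 < (2 * (n / 4 + 1) : ℕ) := by
      have h4 : n < 4 * (n / 4) + 4 := by omega
      have : (n : ℝ) < 4 * ((n / 4 : ℕ) : ℝ) + 4 := by exact_mod_cast h4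
      push_cast
      linarith
    have h1' : (n : ℝ) / 2 < ((D : ℝ) + 1) * R₂ := by
      have : ((2 * (n / 4 + 1) : ℕ) : ℝ) = (R₂ : ℝ) * D + (((2 * (n / 4 + 1)) % R₂ : ℕ) : ℝ) := by
        exact_mod_cast hmod
      have h2' : (((2 * (n / 4 + 1)) % R₂ : ℕ) : ℝ) < (R₂ : ℝ) := by exact_mod_cast hmlt
      nlinarith
    rw [div_add' _ _ _ (ne_of_gt (by positivity : (0:ℝ) < 4 * R₂)), div_le_iff₀ (by positivity)]
    nlinarith [h1', hn8]
  have hD1 : (1 : ℕ) ≤ D := by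
    by_contra hD0
    push_neg at hD0
    have hD0' : D = 0 := Nat.lt_one_iff.mp hD0
    rw [hD0'] at hDlow
    have hnn : (0:ℝ) ≤ (n : ℝ) / (4 * R₂) := div_nonneg (Nat.cast_nonneg n) (by positivity)
    simp only [Nat.cast_zero] at hDlow
    linarith
  have hDcast : ((D - 1 : ℕ) : ℝ) = (D : ℝ) - 1 := by
    push_cast [Nat.cast_sub hD1]
    ring
  calc min ((64 * R₁ * R₂ : ℝ))⁻¹ (((n₀ : ℝ) ^ 2))⁻¹ * (n : ℝ) ^ 2
      ≤ ((64 * R₁ * R₂ : ℝ))⁻¹ * (n : ℝ) ^ 2 := by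
        apply mul_le_mul_of_nonneg_right (min_le_left _ _) (by positivity)
    _ = ((n : ℝ) / (16 * R₁)) * ((n : ℝ) / (4 * R₂)) := by
        field_simp
        ring
    _ ≤ (K₁ : ℝ) * ((D : ℝ) - 1) := by
        exact mul_le_mul hK₁low (by linarith)
          (div_nonneg (Nat.cast_nonneg n) (by positivity)) (Nat.cast_nonneg K₁)
    _ = ((K₁ * (D - 1) : ℕ) : ℝ) := by
        push_cast [hDcast]
        ring
    _ ≤ (T.card : ℝ) := by exact_mod_cast hsum
    _ ≤ (setS.ncard : ℝ) := hTle
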